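/- For every positive integer k and every complex number b with Re(b) > 0, ∑_{j=1}^{k} b^{-2j-1} · ζ(-2j+1) / ( (2j-1)! · (2k-2j)! ) = ∫₀¹ ( ∑_{j=1}^{k} ( b^{-2j-1} / ( (2j-1)! · (2k-2j)! ) ) · ( (-1)^{j} (2π)^{-2j} / j ) · (log u)^{2j} ) / (1-u)² du, where the integral is over u ∈ (0,1). -/

import Mathlib

set_option maxHeartbeats 1000000

open Real Complex Finset
open scoped ENNReal NNReal

open MeasureTheory Set in
private lemma image_exp_neg : (fun t : ℝ => Real.exp (-t)) '' Set.Ioi 0 = Set.Ioo 0 1 := by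
  ext u
  simp only [Set.mem_image, Set.mem_Ioi, Set.mem_Ioo]
  constructor
  · rintro ⟨t, ht, rfl⟩
    exact ⟨Real.exp_pos _, Real.exp_lt_one_iff.mpr (by linarith)⟩
  · rintro ⟨h0, h1⟩
    exact ⟨-Real.log u, by simpa using Real.log_neg h0 h1, by rw [neg_neg, Real.exp_log h0]⟩

open MeasureTheory Set in
private lemma deriv_exp_neg : ∀ t ∈ Set.Ioi (0:ℝ),
    HasDerivWithinAt (fun t : ℝ => Real.exp (-t)) (-Real.exp (-t)) (Set.Ioi 0) t := by
  intro t _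
  have := ((Real.hasDerivAt_exp (-t)).comp t (hasDerivAt_neg t)).hasDerivWithinAt
    (s := Set.Ioi (0:ℝ))
  simp only [Function.comp_def, mul_neg, mul_one] at this
  exact this

private lemma injOn_exp_neg : Set.InjOn (fun t : ℝ => Real.exp (-t)) (Set.Ioi 0) :=
  (Real.exp_injective.comp neg_injective).injOn

open MeasureTheory Set in
private lemma integrableOn_pow_mul_log_pow (m n : ℕ) :
    IntegrableOn (fun u : ℝ => u ^ m * Real.log u ^ n) (Set.Ioo 0 1) := by
  rw [← image_exp_neg,
    integrableOn_image_iff_integrableOn_abs_deriv_smul measurableSet_Ioi deriv_exp_neg injOn_exp_neg]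
  have hG : IntegrableOn (fun x : ℝ => Real.exp (-x) * x ^ ((n:ℝ)+1-1)) (Set.Ioi 0) :=
    Real.GammaIntegral_convergent (by positivity)
  refine MeasureTheory.Integrable.mono hG ?_ ?_
  · have h1 : Measurable fun t : ℝ => Real.exp (-t) :=
      (Real.continuous_exp.comp continuous_neg).measurable
    have : Measurable fun t : ℝ =>
        |(-Real.exp (-t))| * (Real.exp (-t) ^ m * Real.log (Real.exp (-t)) ^ n) :=
      (h1.neg.abs).mul ((h1.pow_const m).mul ((Real.measurable_log.comp h1).pow_const n))
    exact (this.aestronglyMeasurable).congr (by filter_upwards with t using by simp [smul_eq_mul])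
  · rw [ae_restrict_iff' measurableSet_Ioi]
    filter_upwards with t ht
    have ht0 : (0:ℝ) < t := ht
    have h2 : ((n:ℝ)+1) - 1 = (n:ℝ) := by ring
    rw [h2]
    have hrp : t ^ (n:ℝ) = t ^ n := Real.rpow_natCast t n
    simp only [smul_eq_mul, Real.norm_eq_abs, Real.log_exp, abs_mul, abs_abs, abs_neg,
      Real.abs_exp, abs_pow, hrp]
    have e1 : |Real.exp (-t) ^ m| = Real.exp (-t) ^ m := abs_of_nonneg (by positivity)
    have e2 : |(-t) ^ n| = t ^ n := by rw [_root_.abs_pow, abs_neg, abs_of_pos ht0]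
    have e3 : |t ^ n| = t ^ n := abs_of_nonneg (by positivity)
    rw [abs_of_pos ht0]
    have h3 : Real.exp (-t) ^ m ≤ 1 :=
      pow_le_one₀ (Real.exp_nonneg _) (Real.exp_le_one_iff.mpr (by linarith))
    have h4 : (0:ℝ) ≤ t ^ n := by positivity
    calc Real.exp (-t) * (Real.exp (-t) ^ m * t ^ n)
        ≤ Real.exp (-t) * (1 * t ^ n) := by
          apply mul_le_mul_of_nonneg_left _ (Real.exp_nonneg _)
          exact mul_le_mul_of_nonneg_right h3 h4
      _ = Real.exp (-t) * t ^ n := by ring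

open MeasureTheory Set in
private lemma integral_pow_mul_log_pow (m n : ℕ) :
    ∫ u in Set.Ioo (0:ℝ) 1, u ^ m * Real.log u ^ n
      = (-1:ℝ) ^ n * n.factorial / ((m:ℝ)+1) ^ (n+1) := by
  rw [← image_exp_neg,
    integral_image_eq_integral_abs_deriv_smul measurableSet_Ioi deriv_exp_neg injOn_exp_neg]
  have hcong : ∀ t ∈ Set.Ioi (0:ℝ),
      |(-Real.exp (-t))| • ((fun u : ℝ => u ^ m * Real.log u ^ n) (Real.exp (-t)))
        = (-1:ℝ) ^ n * (t ^ (((n:ℝ)+1) - 1) * Real.exp (-(((m:ℝ)+1) * t))) := by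
    intro t ht
    have ht0 : (0:ℝ) < t := ht
    have h2 : ((n:ℝ)+1) - 1 = (n:ℝ) := by ring
    rw [h2, Real.rpow_natCast]
    simp only [smul_eq_mul, Real.log_exp, abs_neg, Real.abs_exp]
    have hm : Real.exp (-t) ^ m = Real.exp (-((m:ℝ) * t)) := by
      rw [← Real.exp_nat_mul]; ring_nf
    rw [hm, neg_pow, show -(((m:ℝ)+1)*t) = -t + -((m:ℝ)*t) by ring, Real.exp_add]
    ring
  rw [setIntegral_congr_fun measurableSet_Ioi hcong, integral_const_mul,
    integral_rpow_mul_exp_neg_mul_Ioi (by positivity) (by positivity),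
    Real.Gamma_nat_eq_factorial n]
  rw [show ((n:ℝ)+1) = ((n+1:ℕ):ℝ) by push_cast; ring, Real.rpow_natCast]
  rw [div_pow, one_pow]
  ring

open MeasureTheory Set in
private lemma key_real (j : ℕ) (hj : 1 ≤ j) :
    IntegrableOn (fun u : ℝ => Real.log u ^ (2*j) / (1-u)^2) (Set.Ioo 0 1) ∧
    ∫ u in Set.Ioo (0:ℝ) 1, Real.log u ^ (2*j) / (1-u)^2
      = (2*j).factorial * ∑' m:ℕ, 1 / ((m:ℝ)+1)^(2*j) := by
  set μ := volume.restrict (Set.Ioo (0:ℝ) 1) with hμ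
  set F : ℕ → ℝ → ℝ := fun m u => (((m:ℝ)+1) * u ^ m) * Real.log u ^ (2*j) with hF
  have h_int : ∀ m, Integrable (F m) μ := by
    intro m
    have h0 := (integrableOn_pow_mul_log_pow m (2*j)).const_mul ((m:ℝ)+1)
    have he : (fun u : ℝ => ((m:ℝ)+1) * (u ^ m * Real.log u ^ (2*j))) = F m := by
      funext u; simp only [hF]; ring
    rwa [he] at h0
  have hm1 : ∀ m : ℕ, (0:ℝ) < (m:ℝ)+1 := fun m => by positivity
  have heven : ∀ x : ℝ, 0 ≤ x ^ (2*j) := fun x => by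
    rw [pow_mul]; positivity
  have h_val : ∀ m, ∫ u, F m u ∂μ = (2*j).factorial / ((m:ℝ)+1)^(2*j) := by
    intro m
    have : ∫ u, F m u ∂μ = ((m:ℝ)+1) * ∫ u in Set.Ioo (0:ℝ) 1, u ^ m * Real.log u ^ (2*j) := by
      rw [hμ, ← integral_const_mul]
      refine setIntegral_congr_fun measurableSet_Ioo fun u _ => ?_
      simp [hF]; ring
    rw [this, integral_pow_mul_log_pow, Even.neg_one_pow (even_two_mul j), one_mul,
      pow_succ]
    field_simp
  have h_nonneg : ∀ m, ∀ u ∈ Set.Ioo (0:ℝ) 1, 0 ≤ F m u := by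
    intro m u hu
    have : (0:ℝ) ≤ u ^ m := le_of_lt (pow_pos hu.1 m)
    have := heven (Real.log u)
    simp only [hF]
    positivity
  have h_norm : ∀ m, ∫ u, ‖F m u‖ ∂μ = (2*j).factorial / ((m:ℝ)+1)^(2*j) := by
    intro m
    rw [← h_val m]
    refine setIntegral_congr_fun measurableSet_Ioo fun u hu => ?_
    exact Real.norm_of_nonneg (h_nonneg m u hu)
  have hsum0 : Summable (fun m : ℕ => 1 / ((m:ℝ)+1)^(2*j)) := by
    have h1 : Summable (fun m : ℕ => 1 / ((m:ℝ))^(2*j)) :=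
      Real.summable_one_div_nat_pow.2 (by omega)
    have := (summable_nat_add_iff 1).2 h1
    refine this.congr fun m => ?_
    push_cast
    ring_nf
  have hsum : Summable (fun m : ℕ => ((2*j).factorial : ℝ) / ((m:ℝ)+1)^(2*j)) := by
    refine (hsum0.mul_left ((2*j).factorial : ℝ)).congr fun m => ?_
    rw [mul_one_div]
  have hlintval : ∀ m, ∫⁻ u, ‖F m u‖₊ ∂μ = ENNReal.ofReal (((2*j).factorial : ℝ) / ((m:ℝ)+1)^(2*j)) := by
    intro m
    exact (ofReal_integral_norm_eq_lintegral_enorm (h_int m)).symm.trans (by rw [h_norm m])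
  have hlint : ∑' m, ∫⁻ u, ‖F m u‖₊ ∂μ ≠ ⊤ := by
    rw [tsum_congr hlintval, ← ENNReal.ofReal_tsum_of_nonneg (fun m => by positivity) hsum]
    exact ENNReal.ofReal_ne_top
  have hmeasF : ∀ m, AEStronglyMeasurable (F m) μ := fun m => (h_int m).1
  have htsum_eq : ∀ u ∈ Set.Ioo (0:ℝ) 1, ∑' m, F m u = Real.log u ^ (2*j) / (1-u)^2 := by
    intro u hu
    have hnorm : ‖u‖ < 1 := by rw [Real.norm_eq_abs, abs_of_pos hu.1]; exact hu.2
    have hgeom := tsum_choose_mul_geometric_of_norm_lt_one (𝕜 := ℝ) 1 hnorm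
    have h1 : ∑' m : ℕ, (((m:ℝ)+1) * u ^ m) = 1 / (1-u)^2 := by
      rw [← hgeom]
      refine tsum_congr fun m => ?_
      rw [Nat.choose_one_right]
      push_cast
      ring
    calc ∑' m, F m u = (∑' m : ℕ, (((m:ℝ)+1) * u ^ m)) * Real.log u ^ (2*j) := tsum_mul_right
      _ = Real.log u ^ (2*j) / (1-u)^2 := by rw [h1]; ring
  have hswap : ∫ u, (∑' m, F m u) ∂μ = ∑' m, ∫ u, F m u ∂μ := integral_tsum hmeasF hlint
  have hae : (fun u => ∑' m, F m u) =ᵐ[μ] (fun u : ℝ => Real.log u ^ (2*j) / (1-u)^2) := by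
    rw [hμ, Filter.EventuallyEq, ae_restrict_iff' measurableSet_Ioo]
    filter_upwards with u hu
    exact htsum_eq u hu
  have hΦmeas : Measurable (fun u : ℝ => Real.log u ^ (2*j) / (1-u)^2) :=
    (Real.measurable_log.pow_const _).div ((measurable_const.sub measurable_id).pow_const 2)
  have hT : Integrable (fun u : ℝ => Real.log u ^ (2*j) / (1-u)^2) μ := by
    refine ⟨hΦmeas.aestronglyMeasurable, ?_⟩
    have hle : ∀ᵐ u ∂μ, (‖Real.log u ^ (2*j) / (1-u)^2‖₊ : ℝ≥0∞) ≤ ∑' m, (‖F m u‖₊ : ℝ≥0∞) := by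
      filter_upwards [hae] with u hu
      rw [← hu]
      by_cases hs : Summable fun m => ‖F m u‖₊
      · exact le_trans (ENNReal.coe_le_coe.2 (nnnorm_tsum_le hs)) (le_of_eq (ENNReal.coe_tsum hs))
      · have : (∑' m, (‖F m u‖₊ : ℝ≥0∞)) = ⊤ := by
          by_contra h
          exact hs (ENNReal.tsum_coe_ne_top_iff_summable.1 h)
        rw [this]
        exact le_top
    refine lt_of_le_of_lt (lintegral_mono_ae hle) ?_
    calc ∫⁻ u, ∑' m, (‖F m u‖₊ : ℝ≥0∞) ∂μ
        = ∑' m, ∫⁻ u, (‖F m u‖₊ : ℝ≥0∞) ∂μ := lintegral_tsum fun m => (hmeasF m).enorm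
      _ < ⊤ := lt_top_iff_ne_top.2 hlint
  constructor
  · exact hT
  · calc ∫ u, Real.log u ^ (2*j) / (1-u)^2 ∂μ
        = ∫ u, (∑' m, F m u) ∂μ := (integral_congr_ae hae).symm
      _ = ∑' m, ∫ u, F m u ∂μ := hswap
      _ = ∑' m : ℕ, ((2*j).factorial : ℝ) / ((m:ℝ)+1)^(2*j) := tsum_congr h_val
      _ = ((2*j).factorial : ℝ) * ∑' m:ℕ, 1 / ((m:ℝ)+1)^(2*j) := by
          rw [← tsum_mul_left]
          exact tsum_congr fun m => (mul_one_div _ _).symm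

private lemma zeta_val (j : ℕ) (hj : 1 ≤ j) :
    riemannZeta (-(2 * (j:ℂ)) + 1)
      = ((-1:ℂ)^j * (2*(Real.pi:ℂ))^(-(2*j:ℤ)) / j) *
        (((2*j).factorial * ∑' m:ℕ, 1 / ((m:ℝ)+1)^(2*j) : ℝ) : ℂ) := by
  have h1 : (-(2 * (j:ℂ)) + 1) = 1 - ((2*j : ℕ) : ℂ) := by push_cast; ring
  have hs : ∀ n : ℕ, ((2*j : ℕ) : ℂ) ≠ -n := by
    intro n h
    have h2 := congrArg Complex.re h
    simp only [Complex.natCast_re, Complex.neg_re] at h2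
    have h3 : (1:ℝ) ≤ ((2*j : ℕ) : ℝ) := by exact_mod_cast (by omega : 1 ≤ 2*j)
    have h4 : (0:ℝ) ≤ ((n:ℕ):ℝ) := Nat.cast_nonneg n
    linarith
  have hs' : ((2*j : ℕ) : ℂ) ≠ 1 := by
    intro h
    rw [show (1:ℂ) = ((1:ℕ):ℂ) by norm_num] at h
    exact (by omega : 2*j ≠ 1) (Nat.cast_injective h)
  rw [h1, riemannZeta_one_sub hs hs']
  have hGamma : Complex.Gamma ((2*j:ℕ):ℂ) = ((2*j-1).factorial : ℂ) := by
    have hn : 2*j = (2*j-1)+1 := by omega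
    rw [hn]
    push_cast
    rw [Complex.Gamma_nat_eq_factorial]
  have hcos : Complex.cos ((Real.pi:ℂ) * ((2*j:ℕ):ℂ) / 2) = (-1:ℂ)^j := by
    have he : ((Real.pi:ℂ) * ((2*j:ℕ):ℂ) / 2) = (((j:ℝ) * Real.pi : ℝ) : ℂ) := by
      push_cast; ring
    rw [he, ← Complex.ofReal_cos,
      show Real.cos ((j:ℝ)*Real.pi) = (-1:ℝ)^j from by
        simpa using Real.cos_nat_mul_pi_sub 0 j]
    push_cast
    ring
  have hzeta : riemannZeta ((2*j:ℕ):ℂ) = ((∑' m:ℕ, 1/((m:ℝ)+1)^(2*j) : ℝ) : ℂ) := by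
    rw [zeta_eq_tsum_one_div_nat_add_one_cpow
      (by rw [Complex.natCast_re]; exact_mod_cast (by omega : 1 < 2*j))]
    rw [Complex.ofReal_tsum]
    refine tsum_congr fun n => ?_
    rw [Complex.cpow_natCast]
    push_cast
    norm_num
  have hpow : ((2:ℂ) * (Real.pi:ℂ)) ^ (-((2*j:ℕ):ℂ)) = (2*(Real.pi:ℂ))^(-(2*j:ℤ)) := by
    rw [show (-((2*j:ℕ):ℂ)) = ((-(2*j:ℤ) : ℤ) : ℂ) by push_cast; ring, Complex.cpow_intCast]
  rw [hGamma, hcos, hzeta, hpow]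
  have hfac : ((2*j).factorial : ℂ) = (2*j) * ((2*j-1).factorial : ℂ) := by
    exact_mod_cast congrArg (Nat.cast : ℕ → ℂ) (Nat.mul_factorial_pred (by omega : 2*j ≠ 0)).symm
  have hjne : (j:ℂ) ≠ 0 := Nat.cast_ne_zero.2 (by omega)
  set S : ℝ := ∑' m:ℕ, 1/((m:ℝ)+1)^(2*j) with hS
  rw [Complex.ofReal_mul, Complex.ofReal_natCast, hfac]
  field_simp

/-- For every positive integer `k` and complex `b` with `Re b > 0`,
`∑_{j=1}^{k} b^{-2j-1} ζ(-2j+1)/((2j-1)!(2k-2j)!)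
  = ∫₀¹ (∑_{j=1}^{k} (b^{-2j-1}/((2j-1)!(2k-2j)!)) ((-1)^j (2π)^{-2j}/j) (log u)^{2j}) / (1-u)² du`. -/
theorem sum_zeta_neg_odd_integral (k : ℕ) (hk : 0 < k) (b : ℂ) (hb : 0 < b.re) :
    ∑ j ∈ Finset.Icc 1 k,
        b ^ (-(2 * j : ℤ) - 1) * riemannZeta (-(2 * (j : ℂ)) + 1) /
          ((Nat.factorial (2 * j - 1) : ℂ) * (Nat.factorial (2 * k - 2 * j) : ℂ)) =
      ∫ u in (0:ℝ)..1,
        (∑ j ∈ Finset.Icc 1 k,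
            (b ^ (-(2 * j : ℤ) - 1) /
                ((Nat.factorial (2 * j - 1) : ℂ) * (Nat.factorial (2 * k - 2 * j) : ℂ))) *
              ((-1 : ℂ) ^ j * (2 * (Real.pi : ℂ)) ^ (-(2 * j : ℤ)) / (j : ℂ)) *
              ((Real.log u : ℂ)) ^ (2 * j)) /
          (1 - (u : ℂ)) ^ 2 := by
  have hbody : ∀ u : ℝ,
      (∑ j ∈ Finset.Icc 1 k,
          (b ^ (-(2 * j : ℤ) - 1) /
              ((Nat.factorial (2 * j - 1) : ℂ) * (Nat.factorial (2 * k - 2 * j) : ℂ))) *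
            ((-1 : ℂ) ^ j * (2 * (Real.pi : ℂ)) ^ (-(2 * j : ℤ)) / (j : ℂ)) *
            ((Real.log u : ℂ)) ^ (2 * j)) / (1 - (u:ℂ)) ^ 2
      = ∑ j ∈ Finset.Icc 1 k,
          (b ^ (-(2 * j : ℤ) - 1) /
              ((Nat.factorial (2 * j - 1) : ℂ) * (Nat.factorial (2 * k - 2 * j) : ℂ))) *
            ((-1 : ℂ) ^ j * (2 * (Real.pi : ℂ)) ^ (-(2 * j : ℤ)) / (j : ℂ)) *
            ((Real.log u ^ (2*j) / (1-u)^2 : ℝ) : ℂ) := by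
    intro u
    rw [Finset.sum_div]
    refine Finset.sum_congr rfl fun j _ => ?_
    push_cast
    ring
  have hIntegrable : ∀ j ∈ Finset.Icc 1 k, IntervalIntegrable
      (fun u : ℝ =>
        (b ^ (-(2 * j : ℤ) - 1) /
            ((Nat.factorial (2 * j - 1) : ℂ) * (Nat.factorial (2 * k - 2 * j) : ℂ))) *
          ((-1 : ℂ) ^ j * (2 * (Real.pi : ℂ)) ^ (-(2 * j : ℤ)) / (j : ℂ)) *
          ((Real.log u ^ (2*j) / (1-u)^2 : ℝ) : ℂ)) MeasureTheory.volume 0 1 := by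
    intro j hj
    obtain ⟨hj1, _⟩ := Finset.mem_Icc.1 hj
    have h1 : MeasureTheory.IntegrableOn
        (fun u : ℝ => Real.log u ^ (2*j) / (1-u)^2) (Set.Ioc 0 1) :=
      (key_real j hj1).1.congr_set_ae (MeasureTheory.Ioo_ae_eq_Ioc).symm
    have h2 := (h1.ofReal (𝕜 := ℂ)).const_mul
      ((b ^ (-(2 * j : ℤ) - 1) /
          ((Nat.factorial (2 * j - 1) : ℂ) * (Nat.factorial (2 * k - 2 * j) : ℂ))) *
        ((-1 : ℂ) ^ j * (2 * (Real.pi : ℂ)) ^ (-(2 * j : ℤ)) / (j : ℂ)))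
    exact (intervalIntegrable_iff_integrableOn_Ioc_of_le zero_le_one).2 h2
  rw [intervalIntegral.integral_congr (fun u _ => hbody u)]
  rw [intervalIntegral.integral_finset_sum hIntegrable]
  refine Finset.sum_congr rfl fun j hj => ?_
  obtain ⟨hj1, _⟩ := Finset.mem_Icc.1 hj
  rw [intervalIntegral.integral_const_mul, intervalIntegral.integral_ofReal]
  have hval : ∫ u in (0:ℝ)..1, Real.log u ^ (2*j) / (1-u)^2
      = (2*j).factorial * ∑' m:ℕ, 1 / ((m:ℝ)+1)^(2*j) := by
    rw [intervalIntegral.integral_of_le zero_le_one,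
      MeasureTheory.integral_Ioc_eq_integral_Ioo]
    exact (key_real j hj1).2
  rw [hval, zeta_val j hj1]
  ring
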